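/- Let X be a Polish space, d: X×X → [0,1] a Borel measurable function, α̃ ∈ (0,1), and T a Markov kernel on X×X such that ∫ d dT(z,·) ≤ α̃ d(z) for every z ∈ X×X with d(z) < 1. For (x,y) ∈ X×X with d(x,y) < 1, let Γ_{x,y} denote the law on (X×X)^ℕ of the Markov chain (Z_n)_{n≥0} with transition kernel T started at Z₀ = (x,y). Then Γ_{x,y}({d(Z_n) ≤ α̃ⁿ for all n ∈ ℕ₀}) ≥ 1 − d(x,y). -/

import Mathlib

open MeasureTheory ProbabilityTheory Filter Topology
open scoped ENNReal NNReal

noncomputable section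

/-- `m` is the law on the sequence space of the Markov chain with transition kernel `T`
and initial distribution `μ`, characterised through its finite-dimensional distributions. -/
def IsTrajLaw {Y : Type*} [MeasurableSpace Y] (T : Kernel Y Y) (μ : Measure Y)
    (m : Measure (ℕ → Y)) : Prop :=
  IsProbabilityMeasure m ∧
  m.map (fun ω => ω 0) = μ ∧
  ∀ n : ℕ, m.map (fun ω => ((fun i : Fin (n + 1) => ω i), ω (n + 1))) =
    (m.map (fun ω => (fun i : Fin (n + 1) => ω i))).bind
      (fun v => (T (v (Fin.last n))).map (fun y => (v, y)))

/-- If the Markov kernel `T` on `X × X` contracts the function `d` by a factor `α̃ < 1`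
below level `1`, then with probability at least `1 - d(x,y)` the chain started at `(x,y)`
satisfies `d(Z_n) ≤ α̃ⁿ` for all `n`. -/
theorem stmt_15 {X : Type*} [TopologicalSpace X] [PolishSpace X]
    [MeasurableSpace X] [BorelSpace X]
    (d : X × X → ℝ) (hd_meas : Measurable d)
    (hd_nonneg : ∀ z, 0 ≤ d z) (hd_le_one : ∀ z, d z ≤ 1)
    (αt : ℝ) (hαt_pos : 0 < αt) (hαt_lt : αt < 1)
    (T : Kernel (X × X) (X × X)) [IsMarkovKernel T]
    (hT : ∀ z : X × X, d z < 1 →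
      ∫⁻ w, ENNReal.ofReal (d w) ∂(T z) ≤ ENNReal.ofReal (αt * d z))
    (x y : X) (hxy : d (x, y) < 1)
    (Γ : Measure (ℕ → X × X)) (hΓ : IsTrajLaw T (Measure.dirac (x, y)) Γ) :
    ENNReal.ofReal (1 - d (x, y)) ≤ Γ {ω | ∀ n : ℕ, d (ω n) ≤ αt ^ n} := by
  obtain ⟨hprob, h0, hrec⟩ := hΓ
  haveI := hprob
  set c : ℝ≥0∞ := ENNReal.ofReal αt with hc
  have hc_pow : ∀ n : ℕ, c ^ n = ENNReal.ofReal (αt ^ n) := fun n =>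
    (ENNReal.ofReal_pow hαt_pos.le n).symm
  have hev : ∀ k : ℕ, Measurable fun ω : ℕ → X × X => ω k := fun k => measurable_pi_apply k
  -- a.e. the chain starts at (x,y)
  have h00 : ∀ᵐ ω ∂Γ, ω 0 = (x, y) := by
    have h1 : Γ.map (fun ω => ω 0) {(x, y)}ᶜ = 0 := by
      rw [h0]
      simp [Measure.dirac_apply' _ (measurableSet_singleton _).compl]
    rw [Measure.map_apply (hev 0) (measurableSet_singleton _).compl] at h1
    rw [ae_iff]
    convert h1 using 2
    rfl
  -- the bad events
  set S : ℕ → Set (ℕ → X × X) := fun n => {ω | ∃ k ≤ n, αt ^ k < d (ω k)} with hS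
  have hS_meas : ∀ n, MeasurableSet (S n) := by
    intro n
    have hEq : S n = ⋃ k ∈ Finset.range (n + 1), {ω : ℕ → X × X | αt ^ k < d (ω k)} := by
      ext ω
      simp [hS, Nat.lt_succ_iff]
    rw [hEq]
    exact (Finset.range (n + 1)).measurableSet_biUnion fun k _ =>
      measurableSet_lt measurable_const (hd_meas.comp (hev k))
  -- the stopped process
  set f : ℕ → (ℕ → X × X) → ℝ≥0∞ := fun n ω =>
    if ω ∈ S n then c ^ n else ENNReal.ofReal (d (ω n)) with hf
  have hf_meas : ∀ n, Measurable (f n) := fun n =>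
    Measurable.ite (hS_meas n) measurable_const ((hd_meas.comp (hev n)).ennreal_ofReal)
  -- one-step supermartingale bound
  have hstep : ∀ n : ℕ, ∫⁻ ω, f (n + 1) ω ∂Γ ≤ c * ∫⁻ ω, f n ω ∂Γ := by
    intro n
    set G : (Fin (n + 1) → X × X) × (X × X) → ℝ≥0∞ := fun p =>
      if ∃ k : Fin (n + 1), αt ^ (k : ℕ) < d (p.1 k) then c ^ (n + 1)
      else if αt ^ (n + 1) < d p.2 then c ^ (n + 1) else ENNReal.ofReal (d p.2) with hG
    have hBset : MeasurableSet {p : (Fin (n + 1) → X × X) × (X × X) |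
        ∃ k : Fin (n + 1), αt ^ (k : ℕ) < d (p.1 k)} := by
      have hEq : {p : (Fin (n + 1) → X × X) × (X × X) |
          ∃ k : Fin (n + 1), αt ^ (k : ℕ) < d (p.1 k)} =
          ⋃ k : Fin (n + 1), {p | αt ^ (k : ℕ) < d (p.1 k)} := by
        ext p; simp
      rw [hEq]
      exact MeasurableSet.iUnion fun k =>
        measurableSet_lt measurable_const
          (hd_meas.comp ((measurable_pi_apply k).comp measurable_fst))
    have hG_meas : Measurable G :=
      Measurable.ite hBset measurable_const
        (Measurable.ite (measurableSet_lt measurable_const (hd_meas.comp measurable_snd))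
          measurable_const ((hd_meas.comp measurable_snd).ennreal_ofReal))
    have hr_meas : Measurable fun ω : ℕ → X × X => (fun i : Fin (n + 1) => ω i) :=
      measurable_pi_lambda _ fun i => hev i
    -- pointwise identification
    have hfG : ∀ ω : ℕ → X × X, f (n + 1) ω = G ((fun i : Fin (n + 1) => ω i), ω (n + 1)) := by
      intro ω
      by_cases hb : ∃ k : Fin (n + 1), αt ^ (k : ℕ) < d (ω k)
      · obtain ⟨k, hk⟩ := hb
        have hmem : ω ∈ S (n + 1) := ⟨k, Nat.le_of_lt_succ (k.2.trans (Nat.lt_succ_self _)), hk⟩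
        rw [hf, hG]
        simp only [if_pos hmem, if_pos (⟨k, hk⟩ : ∃ k : Fin (n + 1), αt ^ (k : ℕ) < d (ω k))]
      · by_cases ht : αt ^ (n + 1) < d (ω (n + 1))
        · have hmem : ω ∈ S (n + 1) := ⟨n + 1, le_refl _, ht⟩
          rw [hf, hG]
          simp only [if_pos hmem, if_neg hb, if_pos ht]
        · have hmem : ω ∉ S (n + 1) := by
            rintro ⟨k, hk, hlt⟩
            rcases Nat.lt_succ_iff_lt_or_eq.mp (Nat.lt_succ_of_le hk) with h | h
            · exact hb ⟨⟨k, h⟩, hlt⟩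
            · exact ht (h ▸ hlt)
          rw [hf, hG]
          simp only [if_neg hmem, if_neg hb, if_neg ht]
      -- measurability of the measure-valued map in the bind
    have hK : Measurable fun v : Fin (n + 1) → X × X =>
        ((T (v (Fin.last n))).map (fun w => (v, w))) := by
      have hEq : (fun v : Fin (n + 1) → X × X => ((T (v (Fin.last n))).map (fun w => (v, w)))) =
          ⇑(Kernel.id ×ₖ (T.comap (fun v : Fin (n + 1) → X × X => v (Fin.last n))
            (measurable_pi_apply _))) := by
        funext v
        rw [Kernel.prod_apply, Kernel.id_apply, Kernel.comap_apply, Measure.dirac_prod]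
      rw [hEq]
      exact Kernel.measurable _
    have hinner_meas : Measurable fun v : Fin (n + 1) → X × X =>
        ∫⁻ w, G (v, w) ∂((T.comap (fun v : Fin (n + 1) → X × X => v (Fin.last n))
          (measurable_pi_apply _)) v) :=
      Measurable.lintegral_kernel_prod_right (by exact hG_meas)
    -- chain of equalities
    have hchain : ∫⁻ ω, f (n + 1) ω ∂Γ =
        ∫⁻ ω, ∫⁻ w, G ((fun i : Fin (n + 1) => ω i), w) ∂(T (ω n)) ∂Γ := by
      calc ∫⁻ ω, f (n + 1) ω ∂Γ
          = ∫⁻ ω, G ((fun i : Fin (n + 1) => ω i), ω (n + 1)) ∂Γ := lintegral_congr hfG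
        _ = ∫⁻ p, G p ∂(Γ.map (fun ω => ((fun i : Fin (n + 1) => ω i), ω (n + 1)))) :=
            (lintegral_map hG_meas (hr_meas.prodMk (hev (n + 1)))).symm
        _ = ∫⁻ p, G p ∂((Γ.map (fun ω => (fun i : Fin (n + 1) => ω i))).bind
              (fun v => (T (v (Fin.last n))).map (fun y => (v, y)))) := by rw [hrec n]
        _ = ∫⁻ v, ∫⁻ p, G p ∂((T (v (Fin.last n))).map (fun w => (v, w)))
              ∂(Γ.map (fun ω => (fun i : Fin (n + 1) => ω i))) :=
            Measure.lintegral_bind hK.aemeasurable hG_meas.aemeasurable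
        _ = ∫⁻ v, ∫⁻ w, G (v, w) ∂(T (v (Fin.last n)))
              ∂(Γ.map (fun ω => (fun i : Fin (n + 1) => ω i))) :=
            lintegral_congr fun v => lintegral_map hG_meas measurable_prodMk_left
        _ = ∫⁻ ω, ∫⁻ w, G ((fun i : Fin (n + 1) => ω i), w) ∂(T (ω n)) ∂Γ :=
            lintegral_map hinner_meas hr_meas
    rw [hchain]
    -- a.e. pointwise bound of the inner integral
    have hbound : ∀ᵐ ω ∂Γ,
        ∫⁻ w, G ((fun i : Fin (n + 1) => ω i), w) ∂(T (ω n)) ≤ c * f n ω := by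
      filter_upwards [h00] with ω hω0
      by_cases hb : ω ∈ S n
      · obtain ⟨k, hk, hlt⟩ := hb
        have hbfin : ∃ j : Fin (n + 1), αt ^ (j : ℕ) < d (ω j) :=
          ⟨⟨k, Nat.lt_succ_of_le hk⟩, hlt⟩
        have hGconst : ∀ w, G ((fun i : Fin (n + 1) => ω i), w) = c ^ (n + 1) := by
          intro w
          rw [hG]
          exact if_pos hbfin
        simp only [hGconst]
        have hfval : f n ω = c ^ n := if_pos ⟨k, hk, hlt⟩
        rw [lintegral_const, measure_univ, mul_one, hfval, pow_succ, mul_comm]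
      · have hbfin : ¬ ∃ j : Fin (n + 1), αt ^ (j : ℕ) < d (ω j) := by
          rintro ⟨j, hj⟩
          exact hb ⟨j, Nat.le_of_lt_succ j.2, hj⟩
        have hpt : ∀ w, G ((fun i : Fin (n + 1) => ω i), w) ≤ ENNReal.ofReal (d w) := by
          intro w
          rw [hG]
          simp only [if_neg hbfin]
          split_ifs with h
          · rw [hc_pow]
            exact ENNReal.ofReal_le_ofReal h.le
          · exact le_refl _
        have hdn : d (ω n) < 1 := by
          rcases Nat.eq_zero_or_pos n with hn | hn
          · subst hn
            rw [hω0]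
            exact hxy
          · have h1 : ¬ αt ^ n < d (ω n) := fun h => hb ⟨n, le_refl n, h⟩
            exact (not_lt.mp h1).trans_lt (pow_lt_one₀ hαt_pos.le hαt_lt hn.ne')
        calc ∫⁻ w, G ((fun i : Fin (n + 1) => ω i), w) ∂(T (ω n))
            ≤ ∫⁻ w, ENNReal.ofReal (d w) ∂(T (ω n)) := lintegral_mono hpt
          _ ≤ ENNReal.ofReal (αt * d (ω n)) := hT _ hdn
          _ = c * ENNReal.ofReal (d (ω n)) := ENNReal.ofReal_mul hαt_pos.le
          _ = c * f n ω := by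
              have hfval : f n ω = ENNReal.ofReal (d (ω n)) := if_neg hb
              rw [hfval]
    calc ∫⁻ ω, ∫⁻ w, G ((fun i : Fin (n + 1) => ω i), w) ∂(T (ω n)) ∂Γ
        ≤ ∫⁻ ω, c * f n ω ∂Γ := lintegral_mono_ae hbound
      _ = c * ∫⁻ ω, f n ω ∂Γ := lintegral_const_mul c (hf_meas n)
  -- the key supermartingale estimate
  have key : ∀ n : ℕ, ∫⁻ ω, f n ω ∂Γ ≤ c ^ n * ENNReal.ofReal (d (x, y)) := by
    intro n
    induction n with
    | zero =>
      have hfe : ∀ ω : ℕ → X × X, f 0 ω = ENNReal.ofReal (d (ω 0)) := by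
        intro ω
        refine if_neg ?_
        rintro ⟨k, hk, hlt⟩
        interval_cases k
        rw [pow_zero] at hlt
        exact absurd hlt (not_lt.mpr (hd_le_one _))
      rw [lintegral_congr hfe]
      have hmap : ∫⁻ z, ENNReal.ofReal (d z) ∂(Γ.map (fun ω => ω 0)) =
          ∫⁻ ω, ENNReal.ofReal (d (ω 0)) ∂Γ :=
        lintegral_map hd_meas.ennreal_ofReal (hev 0)
      rw [← hmap, h0, lintegral_dirac' _ hd_meas.ennreal_ofReal, pow_zero, one_mul]
    | succ n ih =>
      calc ∫⁻ ω, f (n + 1) ω ∂Γ ≤ c * ∫⁻ ω, f n ω ∂Γ := hstep n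
        _ ≤ c * (c ^ n * ENNReal.ofReal (d (x, y))) := mul_le_mul_right ih c
        _ = c ^ (n + 1) * ENNReal.ofReal (d (x, y)) := by rw [pow_succ]; ring
  -- Markov-type bound on the bad events
  have hSn : ∀ n : ℕ, Γ (S n) ≤ ENNReal.ofReal (d (x, y)) := by
    intro n
    have h1 : c ^ n * Γ (S n) ≤ ∫⁻ ω, f n ω ∂Γ := by
      calc c ^ n * Γ (S n)
          = ∫⁻ ω, (S n).indicator (fun _ => c ^ n) ω ∂Γ :=
            (lintegral_indicator_const (hS_meas n) _).symm
        _ ≤ ∫⁻ ω, f n ω ∂Γ := by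
            refine lintegral_mono fun ω => ?_
            by_cases h : ω ∈ S n
            · rw [Set.indicator_of_mem h]
              exact le_of_eq (if_pos h).symm
            · rw [Set.indicator_of_notMem h]
              exact zero_le
    have h2 : c ^ n * Γ (S n) ≤ c ^ n * ENNReal.ofReal (d (x, y)) := h1.trans (key n)
    have hc0 : c ^ n ≠ 0 := pow_ne_zero n (ENNReal.ofReal_pos.mpr hαt_pos).ne'
    have hctop : c ^ n ≠ ⊤ := ENNReal.pow_ne_top ENNReal.ofReal_ne_top
    exact (ENNReal.mul_le_mul_iff_right hc0 hctop).mp h2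
  -- union over n
  have hmono : Monotone S := by
    rintro a b hab ω ⟨k, hk, hlt⟩
    exact ⟨k, hk.trans hab, hlt⟩
  have hUeq : {ω : ℕ → X × X | ∃ k, αt ^ k < d (ω k)} = ⋃ n, S n := by
    ext ω
    simp only [Set.mem_setOf_eq, Set.mem_iUnion, hS]
    exact ⟨fun ⟨k, h⟩ => ⟨k, k, le_refl k, h⟩, fun ⟨n, k, _, h⟩ => ⟨k, h⟩⟩
  have hU_meas : MeasurableSet {ω : ℕ → X × X | ∃ k, αt ^ k < d (ω k)} := by
    rw [hUeq]
    exact MeasurableSet.iUnion hS_meas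
  have hU : Γ {ω : ℕ → X × X | ∃ k, αt ^ k < d (ω k)} ≤ ENNReal.ofReal (d (x, y)) := by
    rw [hUeq, hmono.measure_iUnion]
    exact iSup_le hSn
  -- conclude
  have hcompl : {ω : ℕ → X × X | ∀ n : ℕ, d (ω n) ≤ αt ^ n} =
      {ω : ℕ → X × X | ∃ k, αt ^ k < d (ω k)}ᶜ := by
    ext ω
    simp [not_lt]
  rw [hcompl, measure_compl hU_meas (measure_ne_top Γ _), measure_univ]
  calc ENNReal.ofReal (1 - d (x, y))
      = 1 - ENNReal.ofReal (d (x, y)) := by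
        rw [ENNReal.ofReal_sub _ (hd_nonneg _), ENNReal.ofReal_one]
    _ ≤ 1 - Γ {ω : ℕ → X × X | ∃ k, αt ^ k < d (ω k)} := tsub_le_tsub_left hU 1
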